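/- Let m ≥ 1 and 1 ≤ r ≤ m. Suppose Γ is a set of r-element subsets of [m] with |Γ| = γ, and let D = {S ⊆ [m] : |S| ≥ r and every r-element subset of S belongs to Γ} with |D| ≥ γ'. Then the space of codewords {(f_a(S))_{S ⊆ [m], |S| ≥ r} : a vanishes on Γ} is a linear subspace of the code PRM(r, m−1) of dimension C(m, r) − γ whose support (the set of coordinates S at which some codeword of the subspace is nonzero) has cardinality at most n − γ', where n = ∑_{i=r}^{m} C(m, i). In particular, the (C(m,r) − γ)-th generalized Hamming weight of the binary PRM(r, m−1) code satisfies d_{k−γ} ≤ n − γ'. -/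

import Mathlib

/-- If `Γ` is a set of `γ` r-element subsets of `[m]` and at least `γ'`
coordinates `S` (with `|S| ≥ r`) have all their r-element subsets in `Γ`, then the set of
codewords `{(f_a(S))_{|S| ≥ r} : a vanishes on Γ}` is a linear subspace of PRM(r, m−1) of
dimension `C(m,r) − γ` whose support has cardinality at most `n − γ'`, where
`n = ∑_{i=r}^m C(m,i)`.  In particular `d_{k−γ} ≤ n − γ'` for the generalized Hamming
weights of the binary PRM(r, m−1) code. -/
theorem stmt_9 (m r γ γ' : ℕ) (hm : 1 ≤ m) (hr : 1 ≤ r) (hrm : r ≤ m)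
    (Γ : Finset (Finset (Fin m))) (hΓr : ∀ T ∈ Γ, T.card = r) (hΓc : Γ.card = γ)
    (hD : γ' ≤ (Finset.univ.filter (fun S : Finset (Fin m) =>
        r ≤ S.card ∧ ∀ T ∈ S.powerset, T.card = r → T ∈ Γ)).card) :
    ∃ W : Submodule (ZMod 2) ({S : Finset (Fin m) // r ≤ S.card} → ZMod 2),
      (∀ c, c ∈ W ↔ ∃ a : Finset (Fin m) → ZMod 2, (∀ T ∈ Γ, a T = 0) ∧
          c = fun S => ∑ T ∈ S.1.powerset.filter (fun T => T.card = r), a T) ∧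
      Module.finrank (ZMod 2) W = m.choose r - γ ∧
      Set.ncard {S : {S : Finset (Fin m) // r ≤ S.card} | ∃ c ∈ W, c S ≠ 0}
        ≤ (∑ i ∈ Finset.Icc r m, m.choose i) - γ' := by
  classical
  set ι' := {T : Finset (Fin m) // T.card = r}
  -- the evaluation linear map
  set ψ : (ι' → ZMod 2) →ₗ[ZMod 2] ({S : Finset (Fin m) // r ≤ S.card} → ZMod 2) :=
    { toFun := fun b S => ∑ T ∈ S.1.powerset.filter (fun T => T.card = r),
        (if h : T.card = r then b ⟨T, h⟩ else 0)
      map_add' := by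
        intro b b'
        funext S
        dsimp only [Pi.add_apply]
        rw [← Finset.sum_add_distrib]
        refine Finset.sum_congr rfl fun T hT => ?_
        by_cases h : T.card = r <;> simp [h]
      map_smul' := by
        intro c b
        funext S
        dsimp only [Pi.smul_apply, RingHom.id_apply, smul_eq_mul]
        rw [Finset.mul_sum]
        refine Finset.sum_congr rfl fun T hT => ?_
        by_cases h : T.card = r <;> simp [h] } with hψ
  set π : (ι' → ZMod 2) →ₗ[ZMod 2] ({T : Finset (Fin m) // T ∈ Γ} → ZMod 2) :=
    { toFun := fun b t => b ⟨t.1, hΓr t.1 t.2⟩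
      map_add' := by intros; rfl
      map_smul' := by intros; rfl } with hπ
  set K := LinearMap.ker π with hK
  refine ⟨K.map ψ, ?_, ?_, ?_⟩
  · intro c
    constructor
    · rintro ⟨b, hb, rfl⟩
      refine ⟨fun T => if h : T.card = r then b ⟨T, h⟩ else 0, ?_, rfl⟩
      intro T hT
      have h := hΓr T hT
      dsimp only
      rw [dif_pos h]
      have := congrFun (LinearMap.mem_ker.mp hb) ⟨T, hT⟩
      exact this
    · rintro ⟨a, ha, rfl⟩
      refine ⟨fun T => a T.1, ?_, ?_⟩
      · show π _ = 0
        funext t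
        exact ha t.1 t.2
      · funext S
        show ∑ T ∈ _, _ = _
        refine Finset.sum_congr rfl fun T hT => ?_
        have h := (Finset.mem_filter.mp hT).2
        rw [dif_pos h]
  · -- finrank
    have hinj : Function.Injective ψ := by
      intro b b' h
      funext T₀
      have hle : r ≤ T₀.1.card := le_of_eq T₀.2.symm
      have h2 := congrFun h ⟨T₀.1, hle⟩
      have hfil : (T₀.1.powerset.filter (fun T => T.card = r)) = {T₀.1} := by
        ext T
        simp only [Finset.mem_filter, Finset.mem_powerset, Finset.mem_singleton]
        constructor
        · rintro ⟨hsub, hcard⟩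
          exact Finset.eq_of_subset_of_card_le hsub (by rw [hcard, T₀.2])
        · rintro rfl
          exact ⟨subset_rfl, T₀.2⟩
      simp only [hψ, LinearMap.coe_mk, AddHom.coe_mk, hfil, Finset.sum_singleton] at h2
      rw [dif_pos T₀.2, dif_pos T₀.2] at h2
      exact h2
    have e := Submodule.equivMapOfInjective ψ hinj K
    rw [← LinearEquiv.finrank_eq e]
    have hsurj : Function.Surjective π := by
      intro g
      refine ⟨fun T => if h : T.1 ∈ Γ then g ⟨T.1, h⟩ else 0, ?_⟩
      funext t
      show (if h : t.1 ∈ Γ then g ⟨t.1, h⟩ else 0) = g t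
      rw [dif_pos t.2]
    have hrk := LinearMap.finrank_range_add_finrank_ker π
    rw [LinearMap.range_eq_top.mpr hsurj, finrank_top] at hrk
    have h1 : Module.finrank (ZMod 2) ({T : Finset (Fin m) // T ∈ Γ} → ZMod 2) = γ := by
      rw [Module.finrank_fintype_fun_eq_card, Fintype.card_coe, hΓc]
    have h2 : Module.finrank (ZMod 2) (ι' → ZMod 2) = m.choose r := by
      rw [Module.finrank_fintype_fun_eq_card]
      show Fintype.card {T : Finset (Fin m) // T.card = r} = m.choose r
      rw [Fintype.card_finset_len, Fintype.card_fin]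
    rw [h1, h2] at hrk
    rw [hK]
    omega
  · -- support bound
    set P : {S : Finset (Fin m) // r ≤ S.card} → Prop :=
      fun S => ∀ T ∈ S.1.powerset, T.card = r → T ∈ Γ with hP
    have hsub : {S : {S : Finset (Fin m) // r ≤ S.card} | ∃ c ∈ K.map ψ, c S ≠ 0}
        ⊆ {S | ¬ P S} := by
      rintro S ⟨c, ⟨b, hb, rfl⟩, hc⟩
      intro hPS
      apply hc
      show ∑ T ∈ _, _ = 0
      refine Finset.sum_eq_zero fun T hT => ?_
      obtain ⟨hsubT, hcardT⟩ := Finset.mem_filter.mp hT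
      rw [dif_pos hcardT]
      have hTΓ : T ∈ Γ := hPS T hsubT hcardT
      exact congrFun (LinearMap.mem_ker.mp hb) ⟨T, hTΓ⟩
    have hcard1 : Set.ncard {S : {S : Finset (Fin m) // r ≤ S.card} | ¬ P S}
        ≤ (∑ i ∈ Finset.Icc r m, m.choose i) - γ' := by
      have htot : Fintype.card {S : Finset (Fin m) // r ≤ S.card}
          = ∑ i ∈ Finset.Icc r m, m.choose i := by
        rw [Fintype.card_subtype]
        rw [Finset.card_eq_sum_card_fiberwise (f := fun S : Finset (Fin m) => S.card)
          (t := Finset.Icc r m) (fun S hS => by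
            simp only [Finset.mem_coe, Finset.mem_filter] at hS
            exact Finset.mem_Icc.mpr ⟨hS.2, (Finset.card_le_univ S).trans_eq (by simp)⟩)]
        refine Finset.sum_congr rfl fun i hi => ?_
        obtain ⟨hri, him⟩ := Finset.mem_Icc.mp hi
        have : (Finset.univ.filter (fun S : Finset (Fin m) => r ≤ S.card)).filter
            (fun S => S.card = i) = Finset.powersetCard i Finset.univ := by
          rw [Finset.powersetCard_eq_filter]
          ext S
          simp only [Finset.mem_filter, Finset.mem_univ, Finset.mem_powerset, true_and,
            Finset.subset_univ, and_true]
          exact ⟨fun h => h.2, fun h => ⟨h ▸ hri, h⟩⟩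
        rw [this, Finset.card_powersetCard, Finset.card_univ, Fintype.card_fin]
      have hPcard : γ' ≤ Set.ncard {S : {S : Finset (Fin m) // r ≤ S.card} | P S} := by
        rw [Set.ncard_eq_toFinset_card']
        refine hD.trans (le_of_eq ?_)
        have hi : ∀ (S : Finset (Fin m)), S ∈ Finset.univ.filter (fun S : Finset (Fin m) =>
            r ≤ S.card ∧ ∀ T ∈ S.powerset, T.card = r → T ∈ Γ) → r ≤ S.card := by
          intro S hS
          simp only [Finset.mem_filter] at hS
          exact hS.2.1
        refine Finset.card_bij (fun S hS => (⟨S, hi S hS⟩ : {S : Finset (Fin m) // r ≤ S.card}))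
          ?_ ?_ ?_
        · intro S hS
          simp only [Finset.mem_filter] at hS
          simp only [Set.mem_toFinset]
          exact hS.2.2
        · intro S hS S' hS' h
          exact congrArg Subtype.val h
        · intro S hS
          simp only [Set.mem_toFinset] at hS
          exact ⟨S.1, Finset.mem_filter.mpr ⟨Finset.mem_univ _, S.2, hS⟩, rfl⟩
      have hcompl := Set.ncard_add_ncard_compl {S : {S : Finset (Fin m) // r ≤ S.card} | P S}
        (Set.toFinite _) (Set.toFinite _)
      rw [Nat.card_eq_fintype_card, htot] at hcompl
      have : {S : {S : Finset (Fin m) // r ≤ S.card} | ¬ P S}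
          = {S : {S : Finset (Fin m) // r ≤ S.card} | P S}ᶜ := rfl
      rw [this]
      omega
    exact (Set.ncard_le_ncard hsub (Set.toFinite _)).trans hcard1
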